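/- Let $f : \mathbb{R} \to \mathbb{R}$ be positive with $\lim_{r \to \infty} f(r/l)/f(r/l') = 0$ whenever $0 < l < l'$. Fix $r_0 \ge 1$ an integer and define $S_{t,\nu,l}(d) = 2t^2 + \sum_{n=-r_0}^{r_0} \nu^2 f((d-n)/l)^2$ for $t, \nu, l > 0$. Suppose also that $f(x)^2 \to 0$ as $x \to \infty$ (exponential decay). If $S_{t,\nu,l}(d) = S_{t',\nu',l'}(d)$ for all $d \ge 0$ with $t,t',\nu,\nu',l,l' > 0$, then $t = t'$, $l = l'$, and $\nu = \nu'$. -/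

import Mathlib

open Filter

/-- Truncated second-moment function with general interlayer hopping profile `f`. -/
noncomputable def StruncMom (f : ℝ → ℝ) (r0 : ℕ) (t ν l d : ℝ) : ℝ :=
  2 * t ^ 2 + ∑ n ∈ Finset.Icc (-(r0 : ℤ)) (r0 : ℤ), ν ^ 2 * (f ((d - (n : ℝ)) / l)) ^ 2

lemma shift_atTop (c : ℝ) : Tendsto (fun d : ℝ => d - c) atTop atTop := by
  simpa [sub_eq_add_neg] using tendsto_atTop_add_const_right atTop (-c) tendsto_id

lemma aux_lt (f : ℝ → ℝ) (hfpos : ∀ x, 0 < f x)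
    (hdecaysq : ∀ l l' : ℝ, 0 < l → l < l' →
      Tendsto (fun r : ℝ => (f (r / l)) ^ 2 / (f (r / l')) ^ 2) atTop (nhds 0))
    (r0 : ℕ) (ν ν' l l' : ℝ) (hν : 0 < ν) (hν' : 0 < ν') (hl : 0 < l) (hll' : l < l')
    (heq : ∀ d : ℝ, 0 ≤ d →
      ∑ n ∈ Finset.Icc (-(r0 : ℤ)) (r0 : ℤ), ν ^ 2 * (f ((d - (n : ℝ)) / l)) ^ 2 =
      ∑ n ∈ Finset.Icc (-(r0 : ℤ)) (r0 : ℤ), ν' ^ 2 * (f ((d - (n : ℝ)) / l')) ^ 2) : False := by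
  set s := Finset.Icc (-(r0 : ℤ)) (r0 : ℤ) with hs
  have hsne : s.Nonempty := ⟨0, by simp [hs]⟩
  have hposden : ∀ d : ℝ, 0 < ∑ n ∈ s, ν' ^ 2 * (f ((d - (n : ℝ)) / l')) ^ 2 := fun d =>
    Finset.sum_pos (fun n _ => mul_pos (pow_pos hν' 2) (pow_pos (hfpos _) 2)) hsne
  have key : Tendsto (fun d : ℝ =>
      (∑ n ∈ s, ν ^ 2 * (f ((d - (n : ℝ)) / l)) ^ 2) /
      (∑ n ∈ s, ν' ^ 2 * (f ((d - (n : ℝ)) / l')) ^ 2)) atTop (nhds 0) := by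
    have hbound : Tendsto (fun d : ℝ =>
        ∑ n ∈ s, (ν ^ 2 / ν' ^ 2) * ((f ((d - (n : ℝ)) / l)) ^ 2 / (f ((d - (n : ℝ)) / l')) ^ 2))
        atTop (nhds (∑ n ∈ s, (ν ^ 2 / ν' ^ 2) * 0)) := by
      refine tendsto_finset_sum _ (fun n _ => Tendsto.const_mul _ ?_)
      exact (hdecaysq l l' hl hll').comp (shift_atTop (n : ℝ))
    simp only [mul_zero, Finset.sum_const_zero] at hbound
    refine squeeze_zero (fun d => ?_) (fun d => ?_) hbound
    · exact div_nonneg (Finset.sum_nonneg fun n _ => by positivity) (hposden d).le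
    · rw [Finset.sum_div]
      refine Finset.sum_le_sum fun n hn => ?_
      have h1 : ν' ^ 2 * (f ((d - (n : ℝ)) / l')) ^ 2 ≤
          ∑ m ∈ s, ν' ^ 2 * (f ((d - (m : ℝ)) / l')) ^ 2 :=
        Finset.single_le_sum (f := fun m : ℤ => ν' ^ 2 * (f ((d - (m : ℝ)) / l')) ^ 2)
          (fun m _ => by positivity) hn
      have h2 : 0 < ν' ^ 2 * (f ((d - (n : ℝ)) / l')) ^ 2 :=
        mul_pos (pow_pos hν' 2) (pow_pos (hfpos _) 2)
      calc ν ^ 2 * (f ((d - (n : ℝ)) / l)) ^ 2 / (∑ m ∈ s, ν' ^ 2 * (f ((d - (m : ℝ)) / l')) ^ 2)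
          ≤ ν ^ 2 * (f ((d - (n : ℝ)) / l)) ^ 2 / (ν' ^ 2 * (f ((d - (n : ℝ)) / l')) ^ 2) :=
            div_le_div_of_nonneg_left (by positivity) h2 h1
        _ = (ν ^ 2 / ν' ^ 2) * ((f ((d - (n : ℝ)) / l)) ^ 2 / (f ((d - (n : ℝ)) / l')) ^ 2) := by
            field_simp
  have hev : (fun d : ℝ =>
      (∑ n ∈ s, ν ^ 2 * (f ((d - (n : ℝ)) / l)) ^ 2) /
      (∑ n ∈ s, ν' ^ 2 * (f ((d - (n : ℝ)) / l')) ^ 2)) =ᶠ[atTop] fun _ => (1 : ℝ) := by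
    filter_upwards [eventually_ge_atTop (0 : ℝ)] with d hd
    rw [heq d hd, div_self (hposden d).ne']
  have : (0 : ℝ) = 1 := tendsto_nhds_unique (key.congr' hev) tendsto_const_nhds
  exact zero_ne_one this

/-- identifiability of `(t, l, ν)` from the truncated second-moment
function for a positive, decay-separated hopping profile `f`. -/
theorem stmt9 (f : ℝ → ℝ) (hfpos : ∀ x, 0 < f x)
    (hdecay : ∀ l l' : ℝ, 0 < l → l < l' →
      Tendsto (fun r : ℝ => f (r / l) / f (r / l')) atTop (nhds 0))
    (hdecaysq : ∀ l l' : ℝ, 0 < l → l < l' →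
      Tendsto (fun r : ℝ => (f (r / l)) ^ 2 / (f (r / l')) ^ 2) atTop (nhds 0))
    (hf0 : Tendsto (fun x : ℝ => (f x) ^ 2) atTop (nhds 0))
    (r0 : ℕ) (hr0 : 1 ≤ r0)
    (t ν l t' ν' l' : ℝ)
    (ht : 0 < t) (hν : 0 < ν) (hl : 0 < l)
    (ht' : 0 < t') (hν' : 0 < ν') (hl' : 0 < l')
    (hS : ∀ d : ℝ, 0 ≤ d → StruncMom f r0 t ν l d = StruncMom f r0 t' ν' l' d) :
    t = t' ∧ l = l' ∧ ν = ν' := by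
  set s := Finset.Icc (-(r0 : ℤ)) (r0 : ℤ) with hs
  -- limit of StruncMom
  have hlim : ∀ (a b c : ℝ), 0 < c →
      Tendsto (StruncMom f r0 a b c) atTop (nhds (2 * a ^ 2)) := by
    intro a b c hc
    have hsum : Tendsto (fun d : ℝ => ∑ n ∈ s, b ^ 2 * (f ((d - (n : ℝ)) / c)) ^ 2)
        atTop (nhds (∑ n ∈ s, b ^ 2 * 0)) := by
      refine tendsto_finset_sum _ (fun n _ => Tendsto.const_mul _ ?_)
      exact hf0.comp ((shift_atTop (n : ℝ)).atTop_div_const hc)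
    simp only [mul_zero, Finset.sum_const_zero] at hsum
    have := tendsto_const_nhds (x := 2 * a ^ 2) (f := atTop (α := ℝ)) |>.add hsum
    simp only [add_zero] at this
    exact this
  -- step 1 : t = t'
  have hevS : StruncMom f r0 t ν l =ᶠ[atTop] StruncMom f r0 t' ν' l' := by
    filter_upwards [eventually_ge_atTop (0 : ℝ)] with d hd using hS d hd
  have ht2 : 2 * t ^ 2 = 2 * t' ^ 2 :=
    tendsto_nhds_unique ((hlim t ν l hl).congr' hevS) (hlim t' ν' l' hl')
  have htt : t = t' := by nlinarith [sq_nonneg (t - t'), sq_nonneg (t + t')]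
  -- reduced equation
  have heq : ∀ d : ℝ, 0 ≤ d →
      ∑ n ∈ s, ν ^ 2 * (f ((d - (n : ℝ)) / l)) ^ 2 =
      ∑ n ∈ s, ν' ^ 2 * (f ((d - (n : ℝ)) / l')) ^ 2 := by
    intro d hd
    have := hS d hd
    simp only [StruncMom, htt, hs] at this ⊢
    linarith
  -- step 2 : l = l'
  have hll : l = l' := by
    rcases lt_trichotomy l l' with h | h | h
    · exact absurd (aux_lt f hfpos hdecaysq r0 ν ν' l l' hν hν' hl h heq) id
    · exact h
    · exact absurd (aux_lt f hfpos hdecaysq r0 ν' ν l' l hν' hν hl' h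
        (fun d hd => (heq d hd).symm)) id
  -- step 3 : ν = ν'
  have heq0 := heq 0 le_rfl
  rw [hll] at heq0
  rw [← Finset.mul_sum, ← Finset.mul_sum] at heq0
  have hC : 0 < ∑ n ∈ s, (f ((0 - (n : ℝ)) / l')) ^ 2 :=
    Finset.sum_pos (fun n _ => pow_pos (hfpos _) 2) ⟨0, by simp [hs]⟩
  have hν2 : ν ^ 2 = ν' ^ 2 := mul_right_cancel₀ hC.ne' heq0
  have hνν : ν = ν' := by nlinarith [sq_nonneg (ν - ν'), sq_nonneg (ν + ν')]
  exact ⟨htt, hll, hνν⟩
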